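/- If (μ_t)_{t≥0} is a family of integrable probability measures with negative means which is non-increasing in the usual stochastic order (i.e., μ_t([x,∞)) ≤ μ_s([x,∞)) for all s ≤ t and all x), then (μ_t) is non-decreasing in the WDS order. -/

import Mathlib

open MeasureTheory Set Filter

noncomputable def meanM (μ : Measure ℝ) : ℝ := ∫ y, y ∂μ

noncomputable def rSupE (μ : Measure ℝ) : EReal :=
  sInf ((fun z : ℝ => (z : EReal)) '' {z : ℝ | μ (Ici z) = 0})

noncomputable def psiWds (μ : Measure ℝ) (x : ℝ) : EReal :=
  if (x : EReal) < rSupE μ then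
    ((((∫ y in Ici x, y ∂μ) - meanM μ) / (μ (Ici x)).toReal : ℝ) : EReal)
  else ⊤

noncomputable def Kfun (μ : Measure ℝ) (x : ℝ) : ℝ :=
  (∫ y in Ici x, (y - x) ∂μ) - meanM μ

section Aux

variable {ν : Measure ℝ} (x : ℝ)

lemma integrable_sub_const (hν : Integrable (fun y : ℝ => y) ν)
    [IsFiniteMeasure ν] : Integrable (fun y : ℝ => y - x) ν :=
  hν.sub (integrable_const x)

lemma integrable_max_sub (hν : Integrable (fun y : ℝ => y) ν)
    [IsFiniteMeasure ν] : Integrable (fun y : ℝ => max (y - x) 0) ν :=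
  (integrable_sub_const x hν).pos_part

lemma integrable_max_const_sub (hν : Integrable (fun y : ℝ => y) ν)
    [IsFiniteMeasure ν] : Integrable (fun y : ℝ => max (x - y) 0) ν := by
  have : Integrable (fun y : ℝ => x - y) ν := (integrable_const x).sub hν
  exact this.pos_part

/-- Set integral of `(y - x)` over `Ici x` equals the full integral of the positive part. -/
lemma setIntegral_eq_max (hν : Integrable (fun y : ℝ => y) ν) [IsFiniteMeasure ν] :
    (∫ y in Ici x, (y - x) ∂ν) = ∫ y, max (y - x) 0 ∂ν := by
  have hI : Integrable (fun y : ℝ => max (y - x) 0) ν := integrable_max_sub x hν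
  have h1 : (∫ y in Ici x, max (y - x) 0 ∂ν) + (∫ y in (Ici x)ᶜ, max (y - x) 0 ∂ν)
      = ∫ y, max (y - x) 0 ∂ν := integral_add_compl measurableSet_Ici hI
  have h2 : (∫ y in Ici x, max (y - x) 0 ∂ν) = ∫ y in Ici x, (y - x) ∂ν := by
    refine setIntegral_congr_fun measurableSet_Ici (fun y hy => ?_)
    simp only [mem_Ici] at hy
    simp [max_eq_left (sub_nonneg.mpr hy)]
  have h3 : (∫ y in (Ici x)ᶜ, max (y - x) 0 ∂ν) = 0 := by
    rw [compl_Ici]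
    have : (∫ y in Iio x, max (y - x) 0 ∂ν) = ∫ y in Iio x, (0 : ℝ) ∂ν := by
      refine setIntegral_congr_fun measurableSet_Iio (fun y hy => ?_)
      simp only [mem_Iio] at hy
      simp [max_eq_right (sub_nonpos.mpr hy.le)]
    simp [this]
  rw [← h1, h2, h3, add_zero]

/-- `Kfun ν x = ∫ max (x - y) 0 ∂ν - x` for a probability measure. -/
lemma Kfun_eq (hν : Integrable (fun y : ℝ => y) ν) [IsProbabilityMeasure ν] :
    Kfun ν x = (∫ y, max (x - y) 0 ∂ν) - x := by
  have key : ∀ y : ℝ, max (y - x) 0 = max (x - y) 0 + (y - x) := by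
    intro y
    rcases le_total x y with h | h
    · rw [max_eq_left (sub_nonneg.mpr h), max_eq_right (sub_nonpos.mpr h), zero_add]
    · rw [max_eq_right (sub_nonpos.mpr h), max_eq_left (sub_nonneg.mpr h)]; ring
  have hI1 : Integrable (fun y : ℝ => max (x - y) 0) ν := integrable_max_const_sub x hν
  have hI2 : Integrable (fun y : ℝ => y - x) ν := integrable_sub_const x hν
  have h4 : (∫ y, max (y - x) 0 ∂ν) = (∫ y, max (x - y) 0 ∂ν) + ∫ y, (y - x) ∂ν := by
    rw [← integral_add hI1 hI2]
    exact integral_congr_ae (Eventually.of_forall key)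
  have h5 : (∫ y, (y - x) ∂ν) = meanM ν - x := by
    rw [integral_sub hν (integrable_const x), integral_const]
    simp [meanM]
  rw [Kfun, setIntegral_eq_max x hν, h4, h5]; ring

lemma Kfun_pos (hm : meanM ν < 0) : 0 < Kfun ν x := by
  have h : 0 ≤ ∫ y in Ici x, (y - x) ∂ν :=
    setIntegral_nonneg measurableSet_Ici (fun y hy => sub_nonneg.mpr hy)
  have : 0 < -meanM ν := neg_pos.mpr hm
  unfold Kfun; linarith

end Aux

/-- Monotonicity of `∫ max (x - y) 0` under stochastic dominance. -/
lemma max_int_mono (ν₁ ν₂ : Measure ℝ) [IsProbabilityMeasure ν₁] [IsProbabilityMeasure ν₂]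
    (h₁ : Integrable (fun y : ℝ => y) ν₁) (h₂ : Integrable (fun y : ℝ => y) ν₂)
    (hsto : ∀ x : ℝ, ν₂ (Ici x) ≤ ν₁ (Ici x)) (x : ℝ) :
    (∫ y, max (x - y) 0 ∂ν₁) ≤ ∫ y, max (x - y) 0 ∂ν₂ := by
  have hnn : ∀ y : ℝ, (0 : ℝ) ≤ max (x - y) 0 := fun y => le_max_right _ _
  have hmble : ∀ ν : Measure ℝ, AEMeasurable (fun y : ℝ => max (x - y) 0) ν := fun ν =>
    ((measurable_const.sub measurable_id).max measurable_const).aemeasurable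
  have hset : ∀ t : ℝ, t ∈ Ioi (0 : ℝ) →
      {a : ℝ | t < max (x - a) 0} = Iio (x - t) := by
    intro t ht
    ext a
    simp only [mem_setOf_eq, mem_Iio, lt_max_iff]
    constructor
    · rintro (h | h)
      · linarith
      · exact absurd h (not_lt.mpr (le_of_lt ht))
    · intro h; left; linarith
  have hIio : ∀ (ν : Measure ℝ) [IsProbabilityMeasure ν], ∀ z : ℝ,
      ν (Iio z) = 1 - ν (Ici z) := by
    intro ν _ z
    rw [← compl_Ici, measure_compl measurableSet_Ici (measure_ne_top ν _)]
    simp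
  have key : (∫⁻ y, ENNReal.ofReal (max (x - y) 0) ∂ν₁)
      ≤ ∫⁻ y, ENNReal.ofReal (max (x - y) 0) ∂ν₂ := by
    rw [lintegral_eq_lintegral_meas_lt ν₁ (Eventually.of_forall hnn) (hmble ν₁),
        lintegral_eq_lintegral_meas_lt ν₂ (Eventually.of_forall hnn) (hmble ν₂)]
    refine lintegral_mono_ae ?_
    filter_upwards [ae_restrict_mem measurableSet_Ioi] with t ht
    rw [hset t ht, hIio ν₁ (x - t), hIio ν₂ (x - t)]
    exact tsub_le_tsub_left (hsto (x - t)) 1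
  have fin₂ : (∫⁻ y, ENNReal.ofReal (max (x - y) 0) ∂ν₂) < ⊤ := by
    have hI : Integrable (fun y : ℝ => max (x - y) 0) ν₂ := integrable_max_const_sub x h₂
    have := hI.hasFiniteIntegral
    rwa [hasFiniteIntegral_iff_ofReal (Eventually.of_forall hnn)] at this
  rw [integral_eq_lintegral_of_nonneg_ae (Eventually.of_forall hnn) (hmble ν₁).aestronglyMeasurable,
      integral_eq_lintegral_of_nonneg_ae (Eventually.of_forall hnn) (hmble ν₂).aestronglyMeasurable]
  exact ENNReal.toReal_mono fin₂.ne key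

theorem stmt9 (μ : ℝ → Measure ℝ)
    (hprob : ∀ t, 0 ≤ t → IsProbabilityMeasure (μ t))
    (hint : ∀ t, 0 ≤ t → Integrable (fun y : ℝ => y) (μ t))
    (hneg : ∀ t, 0 ≤ t → meanM (μ t) < 0)
    (hsto : ∀ s t, 0 ≤ s → s ≤ t → ∀ x : ℝ, μ t (Ici x) ≤ μ s (Ici x)) :
    ∀ s t, 0 ≤ s → s ≤ t → ∀ x : ℝ, psiWds (μ s) x ≤ psiWds (μ t) x := by
  intro s t hs hst x
  have ht : 0 ≤ t := hs.trans hst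
  haveI hPs := hprob s hs
  haveI hPt := hprob t ht
  by_cases hxt : (x : EReal) < rSupE (μ t)
  · -- rSupE (μ t) ≤ rSupE (μ s)
    have hr : rSupE (μ t) ≤ rSupE (μ s) := by
      apply sInf_le_sInf
      apply image_mono
      intro z hz
      simp only [mem_setOf_eq] at hz ⊢
      exact le_antisymm (hz ▸ hsto s t hs hst z) zero_le
    have hxs : (x : EReal) < rSupE (μ s) := lt_of_lt_of_le hxt hr
    -- positivity of tails
    have htail : ∀ (u : ℝ), 0 ≤ u → (x : EReal) < rSupE (μ u) → μ u (Ici x) ≠ 0 := by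
      intro u _ hxu h0
      have : rSupE (μ u) ≤ (x : EReal) := by
        apply sInf_le
        exact mem_image_of_mem _ h0
      exact absurd (lt_of_lt_of_le hxu this) (lt_irrefl _)
    have hFt : 0 < (μ t (Ici x)).toReal :=
      ENNReal.toReal_pos (htail t ht hxt) (measure_ne_top _ _)
    have hFs : 0 < (μ s (Ici x)).toReal :=
      ENNReal.toReal_pos (htail s hs hxs) (measure_ne_top _ _)
    have hFts : (μ t (Ici x)).toReal ≤ (μ s (Ici x)).toReal :=
      ENNReal.toReal_mono (measure_ne_top _ _) (hsto s t hs hst x)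
    -- numerator identity: ∫ y in Ici x, y = Kfun + meanM + x * F
    have hnum : ∀ (u : ℝ), 0 ≤ u →
        (∫ y in Ici x, y ∂(μ u)) - meanM (μ u)
          = Kfun (μ u) x + x * (μ u (Ici x)).toReal := by
      intro u hu
      haveI := hprob u hu
      have hIu : IntegrableOn (fun y : ℝ => y) (Ici x) (μ u) := (hint u hu).integrableOn
      have h1 : (∫ y in Ici x, y ∂(μ u))
          = (∫ y in Ici x, (y - x) ∂(μ u)) + x * (μ u (Ici x)).toReal := by
        have : (∫ y in Ici x, (y - x) ∂(μ u))
            = (∫ y in Ici x, y ∂(μ u)) - ∫ y in Ici x, (x : ℝ) ∂(μ u) :=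
          integral_sub hIu (integrableOn_const (measure_ne_top _ _))
        rw [this, setIntegral_const]
        simp [smul_eq_mul, measureReal_def]; ring
      rw [h1, Kfun]; ring
    -- Kfun monotone
    have hK : Kfun (μ s) x ≤ Kfun (μ t) x := by
      rw [Kfun_eq x (hint s hs), Kfun_eq x (hint t ht)]
      have := max_int_mono (μ s) (μ t) (hint s hs) (hint t ht)
        (fun z => hsto s t hs hst z) x
      linarith
    have hKpos : 0 < Kfun (μ s) x := Kfun_pos x (hneg s hs)
    have hKtpos : 0 < Kfun (μ t) x := Kfun_pos x (hneg t ht)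
    -- the real inequality
    have hreal : ((∫ y in Ici x, y ∂(μ s)) - meanM (μ s)) / (μ s (Ici x)).toReal
        ≤ ((∫ y in Ici x, y ∂(μ t)) - meanM (μ t)) / (μ t (Ici x)).toReal := by
      rw [hnum s hs, hnum t ht]
      have e1 : (Kfun (μ s) x + x * (μ s (Ici x)).toReal) / (μ s (Ici x)).toReal
          = Kfun (μ s) x / (μ s (Ici x)).toReal + x := by
        field_simp
      have e2 : (Kfun (μ t) x + x * (μ t (Ici x)).toReal) / (μ t (Ici x)).toReal
          = Kfun (μ t) x / (μ t (Ici x)).toReal + x := by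
        field_simp
      rw [e1, e2]
      have : Kfun (μ s) x / (μ s (Ici x)).toReal ≤ Kfun (μ t) x / (μ t (Ici x)).toReal :=
        div_le_div₀ hKtpos.le hK hFt hFts
      linarith
    rw [psiWds, psiWds, if_pos hxs, if_pos hxt]
    exact_mod_cast hreal
  · rw [psiWds, psiWds]
    rw [if_neg hxt]
    exact le_top
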